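/- Let I ⊆ ℝ be a nonempty open interval, J ⊆ I a nonempty open subinterval, F : I → ℝ affine on J, and g1, g2 : I → ℝ continuous and strictly monotone. Suppose F, f1, f2, g1, g2, G satisfy F((x+y)/2) + f1(x) + f2(y) = G(g1(x) + g2(y)) for all x, y ∈ J. Then there exist an additive function B : ℝ → ℝ and constants β1, β2 ∈ ℝ such that f_k = -(1/2)F + B ∘ g_k + β_k on J for k = 1, 2 and G = B + β1 + β2 on g1(J) + g2(J). -/

import Mathlib

open Set

private lemma ext_add (δ : ℝ) (hδ : 0 < δ) (B0 : ℝ → ℝ)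
    (h : ∀ s t : ℝ, |s| < δ → |t| < δ → B0 (s + t) = B0 s + B0 t) :
    ∃ B : ℝ → ℝ, (∀ u v, B (u + v) = B u + B v) ∧ ∀ t, |t| < δ → B t = B0 t := by
  set b : ℕ → ℝ → ℝ := fun k t => 2 ^ k * B0 (t / 2 ^ k) with hb
  have hstep : ∀ (k : ℕ) (t : ℝ), |t| < 2 ^ (k + 1) * δ → b (k + 1) t = b k t := by
    intro k t ht
    have h2k : (0:ℝ) < 2 ^ (k+1) := by positivity
    have hsmall : |t / 2 ^ (k + 1)| < δ := by
      rw [abs_div, abs_of_pos h2k, div_lt_iff₀ h2k]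
      linarith [ht]
    have : B0 (t / 2 ^ k) = B0 (t / 2 ^ (k + 1)) + B0 (t / 2 ^ (k + 1)) := by
      rw [← h _ _ hsmall hsmall]
      ring_nf
    simp only [hb, this]
    ring
  have hstab : ∀ (k m : ℕ), k ≤ m → ∀ t : ℝ, |t| < 2 ^ k * δ → b m t = b k t := by
    intro k m hkm
    induction m with
    | zero => obtain rfl : k = 0 := by omega
              intro t ht; rfl
    | succ n ih =>
        intro t ht
        rcases Nat.lt_or_ge k (n+1) with hlt | hge
        · have hkn : k ≤ n := by omega
          have : b (n+1) t = b n t := by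
            apply hstep
            calc |t| < 2 ^ k * δ := ht
            _ ≤ 2 ^ (n+1) * δ := by
                have : (2:ℝ) ^ k ≤ 2 ^ (n+1) := by
                  apply pow_le_pow_right₀ (by norm_num) (by omega)
                nlinarith
          rw [this, ih hkn t ht]
        · obtain rfl : k = n + 1 := by omega
          rfl
  set N : ℝ → ℕ := fun t => ⌈|t| / δ⌉₊ + 1 with hN
  have hNlt : ∀ t : ℝ, |t| < 2 ^ (N t) * δ := by
    intro t
    have h1 : |t| ≤ (⌈|t| / δ⌉₊ : ℝ) * δ := by
      rw [← div_le_iff₀ hδ]; exact Nat.le_ceil _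
    have h2 : ((⌈|t| / δ⌉₊ : ℝ) + 1) ≤ 2 ^ (N t) := by
      have h3 : ⌈|t| / δ⌉₊ + 1 ≤ 2 ^ (⌈|t| / δ⌉₊ + 1) := Nat.le_of_lt Nat.lt_two_pow_self
      have h4 : ((⌈|t| / δ⌉₊ + 1 : ℕ) : ℝ) ≤ ((2 ^ (⌈|t| / δ⌉₊ + 1) : ℕ) : ℝ) := by
        exact_mod_cast h3
      simpa [hN] using h4
    nlinarith
  set B : ℝ → ℝ := fun t => b (N t) t with hB
  have hBeq : ∀ (k : ℕ) (t : ℝ), |t| < 2 ^ k * δ → B t = b k t := by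
    intro k t ht
    have h1 := hstab k (max k (N t)) (le_max_left _ _) t ht
    have h2 := hstab (N t) (max k (N t)) (le_max_right _ _) t (hNlt t)
    show b (N t) t = b k t
    rw [← h2, h1]
  refine ⟨B, ?_, ?_⟩
  · intro u v
    obtain ⟨k, hku, hkv⟩ : ∃ k : ℕ, |u| < 2 ^ k * δ ∧ |v| < 2 ^ k * δ := by
      refine ⟨max (N u) (N v), ?_, ?_⟩
      · exact lt_of_lt_of_le (hNlt u) (by
          have : (2:ℝ) ^ (N u) ≤ 2 ^ (max (N u) (N v)) :=
            pow_le_pow_right₀ (by norm_num) (le_max_left _ _)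
          nlinarith [pow_pos (show (0:ℝ)<2 by norm_num) (N u), pow_pos (show (0:ℝ)<2 by norm_num) (N v), hδ])
      · exact lt_of_lt_of_le (hNlt v) (by
          have : (2:ℝ) ^ (N v) ≤ 2 ^ (max (N u) (N v)) :=
            pow_le_pow_right₀ (by norm_num) (le_max_right _ _)
          nlinarith [pow_pos (show (0:ℝ)<2 by norm_num) (N u), pow_pos (show (0:ℝ)<2 by norm_num) (N v), hδ])
    have hsum : |u + v| < 2 ^ (k+1) * δ := by
      calc |u + v| ≤ |u| + |v| := abs_add_le _ _
      _ < 2 ^ k * δ + 2 ^ k * δ := by linarith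
      _ = 2 ^ (k+1) * δ := by ring
    have h2k : (0:ℝ) < 2 ^ (k+1) := by positivity
    have hsu : |u / 2 ^ (k+1)| < δ := by
      rw [abs_div, abs_of_pos h2k, div_lt_iff₀ h2k]
      calc |u| < 2 ^ k * δ := hku
      _ ≤ δ * 2 ^ (k+1) := by rw [pow_succ]; nlinarith [pow_pos (show (0:ℝ)<2 by norm_num) k, hδ]
    have hsv : |v / 2 ^ (k+1)| < δ := by
      rw [abs_div, abs_of_pos h2k, div_lt_iff₀ h2k]
      calc |v| < 2 ^ k * δ := hkv
      _ ≤ δ * 2 ^ (k+1) := by rw [pow_succ]; nlinarith [pow_pos (show (0:ℝ)<2 by norm_num) k, hδ]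
    have hku' : |u| < 2 ^ (k+1) * δ := by
      calc |u| < 2 ^ k * δ := hku
      _ ≤ 2 ^ (k+1) * δ := by rw [pow_succ]; nlinarith [pow_pos (show (0:ℝ)<2 by norm_num) k, hδ]
    have hkv' : |v| < 2 ^ (k+1) * δ := by
      calc |v| < 2 ^ k * δ := hkv
      _ ≤ 2 ^ (k+1) * δ := by rw [pow_succ]; nlinarith [pow_pos (show (0:ℝ)<2 by norm_num) k, hδ]
    rw [hBeq (k+1) _ hsum, hBeq (k+1) _ hku', hBeq (k+1) _ hkv']
    have : (u + v) / 2 ^ (k+1) = u / 2 ^ (k+1) + v / 2 ^ (k+1) := by ring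
    simp only [hb, this, h _ _ hsu hsv]
    ring
  · intro t ht
    have : B t = b 0 t := hBeq 0 t (by simpa using ht)
    simpa [hb] using this


private lemma ball_img (a b c d : ℝ) (hcd : c < d) (hsub : Set.Ioo c d ⊆ Set.Ioo a b)
    (g : ℝ → ℝ) (hc : ContinuousOn g (Set.Ioo a b))
    (hm : StrictMonoOn g (Set.Ioo a b) ∨ StrictAntiOn g (Set.Ioo a b)) :
    ∃ δ > 0, ∀ s : ℝ, |s| < δ → ∃ x ∈ Set.Ioo c d, g x = g ((c + d) / 2) + s := by
  set x0 : ℝ := (c + d) / 2 with hx0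
  set x1 : ℝ := (c + x0) / 2 with hx1
  set x2 : ℝ := (x0 + d) / 2 with hx2
  have hcx0 : c < x0 := by rw [hx0]; linarith
  have hx0d : x0 < d := by rw [hx0]; linarith
  have h01 : x1 ∈ Set.Ioo c d := ⟨by rw [hx1]; linarith, by rw [hx1]; linarith⟩
  have h00 : x0 ∈ Set.Ioo c d := ⟨hcx0, hx0d⟩
  have h02 : x2 ∈ Set.Ioo c d := ⟨by rw [hx2]; linarith, by rw [hx2]; linarith⟩
  have h12 : x1 < x0 := by rw [hx1]; linarith
  have h0x2 : x0 < x2 := by rw [hx2]; linarith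
  have hIccsub : Set.Icc x1 x2 ⊆ Set.Ioo c d := by
    intro z hz
    exact ⟨lt_of_lt_of_le h01.1 hz.1, lt_of_le_of_lt hz.2 h02.2⟩
  have hc' : ContinuousOn g (Set.Icc x1 x2) := hc.mono (hIccsub.trans hsub)
  rcases hm with hmo | han
  · have hg1 : g x1 < g x0 := hmo (hsub h01) (hsub h00) h12
    have hg2 : g x0 < g x2 := hmo (hsub h00) (hsub h02) h0x2
    refine ⟨min (g x0 - g x1) (g x2 - g x0), by
      simp only [lt_min_iff]; constructor <;> linarith, ?_⟩
    intro s hs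
    rw [abs_lt] at hs
    have hl := lt_min_iff.mp hs.2
    have hr := lt_min_iff.mp (neg_lt.mp hs.1)
    have hmem : g x0 + s ∈ Set.Icc (g x1) (g x2) := ⟨by linarith, by linarith⟩
    obtain ⟨x, hx, hgx⟩ := intermediate_value_Icc (le_of_lt (h12.trans h0x2)) hc' hmem
    exact ⟨x, hIccsub hx, hgx⟩
  · have hg1 : g x0 < g x1 := han (hsub h01) (hsub h00) h12
    have hg2 : g x2 < g x0 := han (hsub h00) (hsub h02) h0x2
    refine ⟨min (g x0 - g x2) (g x1 - g x0), by
      simp only [lt_min_iff]; constructor <;> linarith, ?_⟩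
    intro s hs
    rw [abs_lt] at hs
    have hl := lt_min_iff.mp hs.2
    have hr := lt_min_iff.mp (neg_lt.mp hs.1)
    have hmem : g x0 + s ∈ Set.Icc (g x2) (g x1) := ⟨by linarith, by linarith⟩
    obtain ⟨x, hx, hgx⟩ := intermediate_value_Icc' (le_of_lt (h12.trans h0x2)) hc' hmem
    exact ⟨x, hIccsub hx, hgx⟩

open Pointwise

theorem stmt10 (a b c d : ℝ) (hab : a < b) (hcd : c < d)
    (hsub : Set.Ioo c d ⊆ Set.Ioo a b)
    (F f1 f2 g1 g2 G : ℝ → ℝ)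
    (hFaff : ∃ A B0 : ℝ, ∀ x ∈ Set.Ioo c d, F x = A * x + B0)
    (hg1c : ContinuousOn g1 (Set.Ioo a b))
    (hg2c : ContinuousOn g2 (Set.Ioo a b))
    (hg1m : StrictMonoOn g1 (Set.Ioo a b) ∨ StrictAntiOn g1 (Set.Ioo a b))
    (hg2m : StrictMonoOn g2 (Set.Ioo a b) ∨ StrictAntiOn g2 (Set.Ioo a b))
    (heq : ∀ x ∈ Set.Ioo c d, ∀ y ∈ Set.Ioo c d,
      F ((x + y) / 2) + f1 x + f2 y = G (g1 x + g2 y)) :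
    ∃ B : ℝ → ℝ, (∀ u v : ℝ, B (u + v) = B u + B v) ∧
      ∃ β1 β2 : ℝ,
        (∀ x ∈ Set.Ioo c d, f1 x = -(1 / 2) * F x + B (g1 x) + β1) ∧
        (∀ x ∈ Set.Ioo c d, f2 x = -(1 / 2) * F x + B (g2 x) + β2) ∧
        (∀ u ∈ g1 '' Set.Ioo c d + g2 '' Set.Ioo c d, G u = B u + (β1 + β2)) := by
  classical
  obtain ⟨A, C0, hF⟩ := hFaff
  have hx0 : (c + d) / 2 ∈ Set.Ioo c d := ⟨by linarith, by linarith⟩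
  set x0 : ℝ := (c + d) / 2 with hx0def
  set u0 : ℝ := g1 x0 with hu0def
  set v0 : ℝ := g2 x0 with hv0def
  -- key Pexider equation
  have key : ∀ x ∈ Set.Ioo c d, ∀ y ∈ Set.Ioo c d,
      (f1 x + F x / 2) + (f2 y + F y / 2) = G (g1 x + g2 y) := by
    intro x hx y hy
    have hmid : (x + y) / 2 ∈ Set.Ioo c d :=
      ⟨by linarith [hx.1, hy.1], by linarith [hx.2, hy.2]⟩
    have eF : F ((x + y) / 2) = (F x + F y) / 2 := by
      rw [hF _ hmid, hF x hx, hF y hy]; ring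
    have e := heq x hx y hy
    linarith
  set B0 : ℝ → ℝ := fun w => G (u0 + v0 + w) - G (u0 + v0) with hB0def
  -- the translated Cauchy relations
  have lemB1 : ∀ x ∈ Set.Ioo c d, B0 (g1 x - u0) = (f1 x + F x / 2) - (f1 x0 + F x0 / 2) := by
    intro x hx
    have e1 : u0 + v0 + (g1 x - u0) = g1 x + g2 x0 := by rw [hv0def]; ring
    have k1 := key x hx x0 hx0
    have k0 := key x0 hx0 x0 hx0
    simp only [hB0def, e1]
    rw [← hu0def, ← hv0def] at k0
    linarith
  have lemB2 : ∀ y ∈ Set.Ioo c d, B0 (g2 y - v0) = (f2 y + F y / 2) - (f2 x0 + F x0 / 2) := by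
    intro y hy
    have e1 : u0 + v0 + (g2 y - v0) = g1 x0 + g2 y := by rw [hu0def]; ring
    have k1 := key x0 hx0 y hy
    have k0 := key x0 hx0 x0 hx0
    simp only [hB0def, e1]
    rw [← hu0def, ← hv0def] at k0
    linarith
  have cauchyST : ∀ x ∈ Set.Ioo c d, ∀ y ∈ Set.Ioo c d,
      B0 ((g1 x - u0) + (g2 y - v0)) = B0 (g1 x - u0) + B0 (g2 y - v0) := by
    intro x hx y hy
    have e1 : u0 + v0 + ((g1 x - u0) + (g2 y - v0)) = g1 x + g2 y := by ring
    have k1 := key x hx y hy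
    have k0 := key x0 hx0 x0 hx0
    rw [← hu0def, ← hv0def] at k0
    have l1 := lemB1 x hx
    have l2 := lemB2 y hy
    simp only [hB0def, e1] at *
    linarith
  -- balls around u0, v0 inside the images
  obtain ⟨δ1, hδ1, hb1⟩ := ball_img a b c d hcd hsub g1 hg1c hg1m
  obtain ⟨δ2, hδ2, hb2⟩ := ball_img a b c d hcd hsub g2 hg2c hg2m
  set δ : ℝ := min δ1 δ2 with hδdef
  have hδ : 0 < δ := lt_min hδ1 hδ2
  have hb1' : ∀ s : ℝ, |s| < δ → ∃ x ∈ Set.Ioo c d, g1 x = u0 + s := by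
    intro s hs; exact hb1 s (lt_of_lt_of_le hs (min_le_left _ _))
  have hb2' : ∀ s : ℝ, |s| < δ → ∃ y ∈ Set.Ioo c d, g2 y = v0 + s := by
    intro s hs; exact hb2 s (lt_of_lt_of_le hs (min_le_right _ _))
  have cauchy : ∀ s t : ℝ, |s| < δ → |t| < δ → B0 (s + t) = B0 s + B0 t := by
    intro s t hs ht
    obtain ⟨x, hx, hgx⟩ := hb1' s hs
    obtain ⟨y, hy, hgy⟩ := hb2' t ht
    have es : s = g1 x - u0 := by rw [hgx]; ring
    have et : t = g2 y - v0 := by rw [hgy]; ring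
    rw [es, et]
    exact cauchyST x hx y hy
  obtain ⟨B, hBadd, hBagree⟩ := ext_add δ hδ B0 cauchy
  have hBzero : B 0 = 0 := by
    have := hBadd 0 0; simp at this; linarith [this]
  -- convexity of images
  have hpre1 : IsPreconnected (g1 '' Set.Ioo c d) :=
    (isPreconnected_Ioo).image g1 (hg1c.mono hsub)
  have hpre2 : IsPreconnected (g2 '' Set.Ioo c d) :=
    (isPreconnected_Ioo).image g2 (hg2c.mono hsub)
  -- B agrees with B0 on the (translated) images
  have vanish : ∀ (g : ℝ → ℝ) (w0 : ℝ),
      (IsPreconnected (g '' Set.Ioo c d)) → w0 ∈ g '' Set.Ioo c d →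
      (∀ s : ℝ, |s| < δ → w0 + s ∈ g '' Set.Ioo c d) →
      (∀ s t : ℝ, |t| < δ → (w0 + s) ∈ g '' Set.Ioo c d →
          B0 (s + t) = B0 s + B0 t) →
      ∀ w ∈ g '' Set.Ioo c d, B (w - w0) = B0 (w - w0) := by
    intro g w0 hpre hw0 hball hC w hw
    set s : ℝ := w - w0 with hsdef
    set n : ℕ := ⌈|s| / δ⌉₊ + 1 with hndef
    have hnpos : 0 < (n:ℝ) := by positivity
    have hsn : |s| < n * δ := by
      have h1 : |s| / δ ≤ (⌈|s| / δ⌉₊ : ℝ) := Nat.le_ceil _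
      have h2 : |s| ≤ (⌈|s| / δ⌉₊ : ℝ) * δ := by
        rw [← div_le_iff₀ hδ]; exact h1
      have h3 : ((⌈|s| / δ⌉₊ : ℝ)) < (n : ℝ) := by
        rw [hndef]; push_cast; linarith
      nlinarith
    have hsmall : |s / n| < δ := by
      rw [abs_div, abs_of_pos hnpos, div_lt_iff₀ hnpos]
      linarith [hsn]
    have hmem : ∀ k : ℕ, k ≤ n → w0 + (k : ℝ) * (s / n) ∈ g '' Set.Ioo c d := by
      intro k hk
      have hk' : (k : ℝ) ≤ n := by exact_mod_cast hk
      have hk0 : (0:ℝ) ≤ k := Nat.cast_nonneg k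
      have hns : (n:ℝ) * (s / n) = s := by field_simp
      have hws : w = w0 + s := by rw [hsdef]; ring
      rcases le_or_gt 0 s with hs0 | hs0
      · have hsn0 : 0 ≤ s / n := div_nonneg hs0 hnpos.le
        have h1 : 0 ≤ (k:ℝ) * (s / n) := mul_nonneg hk0 hsn0
        have h2 : (k:ℝ) * (s / n) ≤ (n:ℝ) * (s / n) :=
          mul_le_mul_of_nonneg_right hk' hsn0
        apply hpre.Icc_subset hw0 hw
        exact ⟨by linarith, by rw [hws]; linarith [hns]⟩
      · have hsn0 : s / n ≤ 0 := by rw [div_nonpos_iff]; exact Or.inr ⟨hs0.le, hnpos.le⟩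
        have h1 : (k:ℝ) * (s / n) ≤ 0 := mul_nonpos_of_nonneg_of_nonpos hk0 hsn0
        have h2 : (n:ℝ) * (s / n) ≤ (k:ℝ) * (s / n) :=
          mul_le_mul_of_nonpos_right hk' hsn0
        apply hpre.Icc_subset hw hw0
        exact ⟨by rw [hws]; linarith [hns], by linarith⟩
    have main : ∀ k : ℕ, k ≤ n → B ((k : ℝ) * (s / n)) = B0 ((k : ℝ) * (s / n)) := by
      intro k
      induction k with
      | zero => intro _; simp only [Nat.cast_zero, zero_mul]
                exact hBagree 0 (by simpa using hδ)
      | succ m ih =>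
          intro hm
          have hm' : m ≤ n := by omega
          have hsplit : ((m + 1 : ℕ) : ℝ) * (s / n) = (m : ℝ) * (s / n) + s / n := by
            push_cast; ring
          rw [hsplit, hBadd]
          have hc := hC ((m : ℝ) * (s / n)) (s / n) hsmall (hmem m hm')
          rw [hc, ih hm', hBagree _ hsmall]
    have hfin := main n le_rfl
    have : (n : ℝ) * (s / n) = s := by field_simp
    rw [this] at hfin
    exact hfin
  -- specialize to g1 and g2
  have hu0mem : u0 ∈ g1 '' Set.Ioo c d := ⟨x0, hx0, rfl⟩
  have hv0mem : v0 ∈ g2 '' Set.Ioo c d := ⟨x0, hx0, rfl⟩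
  have van1 : ∀ x ∈ Set.Ioo c d, B (g1 x - u0) = B0 (g1 x - u0) := by
    intro x hx
    have := vanish g1 u0 hpre1 hu0mem
      (fun s hs => by obtain ⟨x', hx', he⟩ := hb1' s hs; exact ⟨x', hx', he.symm ▸ rfl⟩)
      (fun s t ht hmem => by
        obtain ⟨x', hx', hex⟩ := hmem
        obtain ⟨y', hy', hey⟩ := hb2' t ht
        have es : s = g1 x' - u0 := by rw [hex]; ring
        have et : t = g2 y' - v0 := by rw [hey]; ring
        rw [es, et]; exact cauchyST x' hx' y' hy')
      (g1 x) ⟨x, hx, rfl⟩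
    exact this
  have van2 : ∀ y ∈ Set.Ioo c d, B (g2 y - v0) = B0 (g2 y - v0) := by
    intro y hy
    have := vanish g2 v0 hpre2 hv0mem
      (fun s hs => by obtain ⟨y', hy', he⟩ := hb2' s hs; exact ⟨y', hy', he.symm ▸ rfl⟩)
      (fun s t ht hmem => by
        obtain ⟨y', hy', hey⟩ := hmem
        obtain ⟨x', hx', hex⟩ := hb1' t ht
        have es : s = g2 y' - v0 := by rw [hey]; ring
        have et : t = g1 x' - u0 := by rw [hex]; ring
        have := cauchyST x' hx' y' hy'
        rw [es, et, add_comm (g2 y' - v0) (g1 x' - u0), this]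
        ring)
      (g2 y) ⟨y, hy, rfl⟩
    exact this
  -- conclude
  refine ⟨B, hBadd, (f1 x0 + F x0 / 2) - B u0, (f2 x0 + F x0 / 2) - B v0, ?_, ?_, ?_⟩
  · intro x hx
    have l1 := lemB1 x hx
    have v1 := van1 x hx
    have hBsplit : B (g1 x) = B (g1 x - u0) + B u0 := by
      have h := hBadd (g1 x - u0) u0
      rw [sub_add_cancel] at h
      exact h
    have key1 : B (g1 x - u0) = f1 x + F x / 2 - (f1 x0 + F x0 / 2) := v1.trans l1
    rw [hBsplit]
    linarith [key1]
  · intro y hy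
    have l2 := lemB2 y hy
    have v2 := van2 y hy
    have hBsplit : B (g2 y) = B (g2 y - v0) + B v0 := by
      have h := hBadd (g2 y - v0) v0
      rw [sub_add_cancel] at h
      exact h
    have key2 : B (g2 y - v0) = f2 y + F y / 2 - (f2 x0 + F x0 / 2) := v2.trans l2
    rw [hBsplit]
    linarith [key2]
  · intro u hu
    rw [Set.mem_add] at hu
    obtain ⟨p, hp, q, hq, rfl⟩ := hu
    obtain ⟨x, hx, rfl⟩ := hp
    obtain ⟨y, hy, rfl⟩ := hq
    have k1 := key x hx y hy
    have l1 := lemB1 x hx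
    have l2 := lemB2 y hy
    have v1 := van1 x hx
    have v2 := van2 y hy
    have hBsplit1 : B (g1 x) = B (g1 x - u0) + B u0 := by
      have h := hBadd (g1 x - u0) u0; rw [sub_add_cancel] at h; exact h
    have hBsplit2 : B (g2 y) = B (g2 y - v0) + B v0 := by
      have h := hBadd (g2 y - v0) v0; rw [sub_add_cancel] at h; exact h
    have hBsum : B (g1 x + g2 y) = B (g1 x) + B (g2 y) := hBadd _ _
    have key1 : B (g1 x - u0) = f1 x + F x / 2 - (f1 x0 + F x0 / 2) := v1.trans l1
    have key2 : B (g2 y - v0) = f2 y + F y / 2 - (f2 x0 + F x0 / 2) := v2.trans l2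
    rw [← k1, hBsum, hBsplit1, hBsplit2]
    linarith [key1, key2]
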